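/- Let k ≥ 0 and let σ ∈ Σ_{2^{k+1}} be the permutation sending 2i to 2^k + i and 2i−1 to i for 1 ≤ i ≤ 2^k. Then the subgroup of Σ_{2^{k+1}} generated by the wreath product subgroup Σ_2 ≀ Σ_{2^k} (acting by permuting the two blocks {1,…,2^k}, {2^k+1,…,2^{k+1}} and within each block) together with σ is all of Σ_{2^{k+1}}. -/
import Mathlib

theorem stmt_1 (k : ℕ) (σ : Equiv.Perm (Fin (2 ^ (k + 1))))
    (hσ : ∀ j : Fin (2 ^ (k + 1)),
      (σ j).val = if j.val % 2 = 0 then j.val / 2 else 2 ^ k + j.val / 2) :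
    Subgroup.closure
      ({π : Equiv.Perm (Fin (2 ^ (k + 1))) |
          (∀ i, (π i).val < 2 ^ k ↔ i.val < 2 ^ k) ∨
          (∀ i, (π i).val < 2 ^ k ↔ ¬ i.val < 2 ^ k)} ∪ {σ}) = ⊤ := by
  have hm1 : 1 ≤ 2 ^ k := Nat.one_le_two_pow
  have hmn : 2 ^ k < 2 ^ (k + 1) := Nat.pow_lt_pow_right one_lt_two (Nat.lt_succ_self k)
  have h0N : (0 : ℕ) < 2 ^ (k + 1) := Nat.two_pow_pos _
  set S : Set (Equiv.Perm (Fin (2 ^ (k + 1)))) :=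
    ({π : Equiv.Perm (Fin (2 ^ (k + 1))) |
        (∀ i, (π i).val < 2 ^ k ↔ i.val < 2 ^ k) ∨
        (∀ i, (π i).val < 2 ^ k ↔ ¬ i.val < 2 ^ k)} ∪ {σ}) with hS
  have hmN : 2 ^ k < 2 ^ (k + 1) := hmn
  -- within-block swaps are in the closure
  have hswap : ∀ x y : Fin (2 ^ (k + 1)), (x.val < 2 ^ k ↔ y.val < 2 ^ k) →
      Equiv.swap x y ∈ Subgroup.closure S := by
    intro x y hxy
    refine Subgroup.subset_closure (Or.inl (Or.inl ?_))
    intro i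
    rcases eq_or_ne i x with rfl | hix
    · rw [Equiv.swap_apply_left]; exact hxy.symm
    rcases eq_or_ne i y with rfl | hiy
    · rw [Equiv.swap_apply_right]; exact hxy
    · rw [Equiv.swap_apply_of_ne_of_ne hix hiy]
  have hσmem : σ ∈ Subgroup.closure S := Subgroup.subset_closure (Or.inr rfl)
  -- the cross transposition t = swap 0 ⟨2^k⟩
  have ht : Equiv.swap (⟨0, h0N⟩ : Fin (2 ^ (k + 1))) ⟨2 ^ k, hmN⟩ ∈ Subgroup.closure S := by
    rcases eq_or_lt_of_le hm1 with hm | hm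
    · -- 2^k = 1 : the cross swap is itself block-swapping
      refine Subgroup.subset_closure (Or.inl (Or.inr ?_))
      intro i
      rcases eq_or_ne i ⟨0, h0N⟩ with rfl | hi0
      · rw [Equiv.swap_apply_left]; simp
      rcases eq_or_ne i ⟨2 ^ k, hmN⟩ with rfl | him
      · rw [Equiv.swap_apply_right]; simp
      · rw [Equiv.swap_apply_of_ne_of_ne hi0 him]
        have h1 : i.val ≠ 0 := fun h => hi0 (Fin.ext h)
        have h2 : i.val ≠ 2 ^ k := fun h => him (Fin.ext h)
        have h3 := i.isLt
        have h4 : 2 ^ (k + 1) = 2 * 2 ^ k := by rw [pow_succ]; ring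
        omega
    · -- 2^k ≥ 2 : conjugate swap 0 1 by σ
      have h1N : (1 : ℕ) < 2 ^ (k + 1) := lt_trans hm hmn
      have hσ0 : σ ⟨0, h0N⟩ = ⟨0, h0N⟩ := by
        apply Fin.ext
        rw [hσ]
        norm_num
      have hσ1 : σ ⟨1, h1N⟩ = ⟨2 ^ k, hmN⟩ := by
        apply Fin.ext
        rw [hσ]
        norm_num
      have hkey := Equiv.swap_apply_apply σ (⟨0, h0N⟩ : Fin (2 ^ (k + 1))) ⟨1, h1N⟩
      rw [hσ0, hσ1] at hkey
      rw [hkey]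
      exact Subgroup.mul_mem _ (Subgroup.mul_mem _ hσmem
        (hswap _ _ (iff_of_true hm1 hm))) (Subgroup.inv_mem _ hσmem)
  -- all swaps are in the closure
  have hall : ∀ x y : Fin (2 ^ (k + 1)), Equiv.swap x y ∈ Subgroup.closure S := by
    have cross : ∀ x y : Fin (2 ^ (k + 1)), x.val < 2 ^ k → ¬ y.val < 2 ^ k →
        Equiv.swap x y ∈ Subgroup.closure S := by
      intro x y hx hy
      have hc1 : Equiv.swap (⟨0, h0N⟩ : Fin (2 ^ (k + 1))) x ∈ Subgroup.closure S :=
        hswap _ _ (iff_of_true hm1 hx)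
      have hc2 : Equiv.swap (⟨2 ^ k, hmN⟩ : Fin (2 ^ (k + 1))) y ∈ Subgroup.closure S :=
        hswap _ _ (iff_of_false (lt_irrefl _) hy)
      set c : Equiv.Perm (Fin (2 ^ (k + 1))) :=
        Equiv.swap ⟨0, h0N⟩ x * Equiv.swap ⟨2 ^ k, hmN⟩ y with hc
      have hcmem : c ∈ Subgroup.closure S := Subgroup.mul_mem _ hc1 hc2
      have e1 : (Equiv.swap (⟨2 ^ k, hmN⟩ : Fin (2 ^ (k + 1))) y) ⟨0, h0N⟩ = ⟨0, h0N⟩ := by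
        apply Equiv.swap_apply_of_ne_of_ne
        · intro h
          have : (0 : ℕ) = 2 ^ k := congrArg Fin.val h
          omega
        · intro h
          exact hy (by rw [← h]; exact hm1)
      have hc0 : c ⟨0, h0N⟩ = x := by
        show (Equiv.swap ⟨0, h0N⟩ x) ((Equiv.swap ⟨2 ^ k, hmN⟩ y) ⟨0, h0N⟩) = x
        rw [e1, Equiv.swap_apply_left]
      have e2 : (Equiv.swap (⟨0, h0N⟩ : Fin (2 ^ (k + 1))) x) y = y := by
        apply Equiv.swap_apply_of_ne_of_ne
        · intro h
          exact hy (by rw [h]; exact hm1)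
        · intro h
          exact hy (h ▸ hx)
      have hcm : c ⟨2 ^ k, hmN⟩ = y := by
        show (Equiv.swap ⟨0, h0N⟩ x) ((Equiv.swap ⟨2 ^ k, hmN⟩ y) ⟨2 ^ k, hmN⟩) = y
        rw [Equiv.swap_apply_left, e2]
      have hkey := Equiv.swap_apply_apply c (⟨0, h0N⟩ : Fin (2 ^ (k + 1))) ⟨2 ^ k, hmN⟩
      rw [hc0, hcm] at hkey
      rw [hkey]
      exact Subgroup.mul_mem _ (Subgroup.mul_mem _ hcmem ht) (Subgroup.inv_mem _ hcmem)
    intro x y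
    by_cases hx : x.val < 2 ^ k <;> by_cases hy : y.val < 2 ^ k
    · exact hswap x y (by tauto)
    · exact cross x y hx hy
    · rw [Equiv.swap_comm]; exact cross y x hy hx
    · exact hswap x y (by tauto)
  -- conclude
  apply top_unique
  rw [← Equiv.Perm.closure_isSwap]
  apply (Subgroup.closure_le _).2
  rintro π ⟨x, y, hxy, rfl⟩
  exact hall x y
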